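/- The function f(x) = x·⌈log₂ x⌉ - 2^⌈log₂ x⌉ + 1 is continuous on the positive reals, despite involving the discontinuous ceiling function. -/

import Mathlib

open Real Set

lemma cont_two_rpow : Continuous (fun t : ℝ => (2:ℝ) ^ t) :=
  continuous_iff_continuousAt.2 fun _ => Real.continuousAt_const_rpow two_ne_zero

lemma F_cont : Continuous (fun st : ℝ × ℝ =>
    st.1 * (Int.fract st.2 - (2:ℝ) ^ Int.fract st.2)) := by
  apply ContinuousOn.comp_fract' (f := fun (b t : ℝ) => b * (t - (2:ℝ)^t))
  · exact ((continuous_fst.mul (continuous_snd.sub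
      (cont_two_rpow.comp continuous_snd))).continuousOn)
  · intro s
    simp [Real.rpow_one]
    ring

theorem W_continuous :
    ContinuousOn
      (fun x : ℝ =>
        x * (⌈Real.logb 2 x⌉ : ℝ) - (2 : ℝ) ^ ((⌈Real.logb 2 x⌉ : ℝ)) + 1)
      (Set.Ioi (0 : ℝ)) := by
  have hlogb : ContinuousOn (fun x : ℝ => Real.logb 2 x) (Set.Ioi 0) :=
    Real.continuousOn_logb.mono (fun x hx => by
      simp only [mem_compl_iff, mem_singleton_iff]
      exact ne_of_gt (mem_Ioi.1 hx))
  have hg : ContinuousOn (fun x : ℝ =>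
      x * Real.logb 2 x +
      x * (Int.fract (-Real.logb 2 x) - (2:ℝ) ^ Int.fract (-Real.logb 2 x)) + 1)
      (Set.Ioi 0) := by
    apply ContinuousOn.add
    apply ContinuousOn.add
    · exact continuousOn_id.mul hlogb
    · exact F_cont.comp_continuousOn (continuousOn_id.prodMk hlogb.neg)
    · exact continuousOn_const
  apply hg.congr
  intro x hx
  have hx0 : (0:ℝ) < x := mem_Ioi.1 hx
  set L := Real.logb 2 x with hL
  have hfract : Int.fract (-L) = (⌈L⌉ : ℝ) - L := by
    rw [Int.fract, Int.floor_neg]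
    push_cast
    ring
  have h2L : (2:ℝ) ^ L = x := Real.rpow_logb (by norm_num) (by norm_num) hx0
  have h2c : (2:ℝ) ^ ((⌈L⌉:ℝ)) = x * (2:ℝ) ^ ((⌈L⌉:ℝ) - L) := by
    rw [← h2L, ← Real.rpow_add (by norm_num)]
    ring_nf
  show x * (⌈L⌉:ℝ) - (2:ℝ)^((⌈L⌉:ℝ)) + 1 =
      x * L + x * (Int.fract (-L) - (2:ℝ)^Int.fract (-L)) + 1
  rw [hfract, h2c]
  ring
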